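/- Assume that for each k ≥ 2 the limit α_k = lim_{n→∞} f(n,k)^{1/n} exists. Then the sequence (α_k) is nonincreasing, converges to some α ≥ 0, and lim_{n→∞} f(n)^{1/n} exists and equals α. -/

import Mathlib

open Finset Filter
open scoped Classical

/-- A finite set of naturals is primitive: no element divides another distinct element. -/
def Primitive (S : Finset ℕ) : Prop := ∀ a ∈ S, ∀ b ∈ S, a ≠ b → ¬ a ∣ b

/-- `f n` is the number of primitive subsets of `{1,...,n}`. -/
noncomputable def f (n : ℕ) : ℕ :=
  ((Finset.Icc 1 n).powerset.filter Primitive).card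

/-- A natural is `k`-smooth: all its prime factors are at most the `k`-th prime. -/
def SmoothNat (k m : ℕ) : Prop := ∀ p, p.Prime → p ∣ m → p ≤ Nat.nth Nat.Prime (k - 1)

/-- A set is `k`-core: no two distinct elements `a ∣ b` with `b/a` having all
prime factors at most the `k`-th prime. -/
def KCore (k : ℕ) (S : Finset ℕ) : Prop :=
  ∀ a ∈ S, ∀ b ∈ S, a ≠ b → ¬ (a ∣ b ∧ SmoothNat k (b / a))

/-- `fk n k` is the number of `k`-core subsets of `{1,...,n}`. -/
noncomputable def fk (n k : ℕ) : ℕ :=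
  ((Finset.Icc 1 n).powerset.filter (KCore k)).card

/-- `Dk k` is the product of the first `k` primes. -/
noncomputable def Dk (k : ℕ) : ℕ := ∏ i ∈ Finset.range k, Nat.nth Nat.Prime i

/-- `Pk k x` is the number of primitive subsets of the set of `k`-smooth integers in `{1,...,x}`. -/
noncomputable def Pk (k x : ℕ) : ℕ :=
  (((Finset.Icc 1 x).filter (SmoothNat k)).powerset.filter Primitive).card

lemma one_le_f (n : ℕ) : 1 ≤ f n := by
  apply Finset.card_pos.mpr
  exact ⟨∅, by simp [Finset.mem_filter, Primitive]⟩

lemma f_le_fk (n k : ℕ) : f n ≤ fk n k := by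
  apply Finset.card_le_card
  intro S hS
  simp only [Finset.mem_filter] at *
  exact ⟨hS.1, fun a ha b hb hab hd => hS.2 a ha b hb hab hd.1⟩

lemma fk_anti (n k : ℕ) : fk n (k+1) ≤ fk n k := by
  apply Finset.card_le_card
  intro S hS
  simp only [Finset.mem_filter] at *
  refine ⟨hS.1, fun a ha b hb hab hd => hS.2 a ha b hb hab ⟨hd.1, ?_⟩⟩
  intro p hp hpm
  refine (hd.2 p hp hpm).trans ?_
  exact (Nat.nth_le_nth Nat.infinite_setOf_prime).mpr (by omega)

lemma fk_le (n k : ℕ) (hk : 1 ≤ k) : fk n k ≤ 2 ^ (n / k) * f n := by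
  classical
  set T : Finset ℕ := Finset.Icc 1 (n / k) with hT
  have key : ∀ S ∈ (Finset.Icc 1 n).powerset.filter (KCore k), Primitive (S \ T) := by
    intro S hS
    rw [Finset.mem_filter, Finset.mem_powerset] at hS
    obtain ⟨hSsub, hKC⟩ := hS
    intro a ha b hb hab hdvd
    have haS : a ∈ S := (Finset.mem_sdiff.mp ha).1
    have hbS : b ∈ S := (Finset.mem_sdiff.mp hb).1
    have h1a := Finset.mem_Icc.mp (hSsub haS)
    have h1b := Finset.mem_Icc.mp (hSsub hbS)
    have hagt : n / k < a := by
      have hna := (Finset.mem_sdiff.mp ha).2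
      rw [hT, Finset.mem_Icc] at hna
      omega
    refine hKC a haS b hbS hab ⟨hdvd, ?_⟩
    intro p hp hpd
    have hq : b / a < k := by
      by_contra hge
      push_neg at hge
      have h1 : k * a ≤ b / a * a := Nat.mul_le_mul_right a hge
      rw [Nat.div_mul_cancel hdvd] at h1
      have h2 : n % k < k := Nat.mod_lt _ (by omega)
      have h3 : n = k * (n / k) + n % k := (Nat.div_add_mod n k).symm
      nlinarith
    have hba : 0 < b / a := Nat.div_pos (Nat.le_of_dvd (by omega) hdvd) (by omega)
    have hple : p ≤ b / a := Nat.le_of_dvd hba hpd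
    have hnth : k - 1 ≤ Nat.nth Nat.Prime (k - 1) :=
      (Nat.nth_strictMono Nat.infinite_setOf_prime).le_apply
    omega
  have hinj :
      ((Finset.Icc 1 n).powerset.filter (KCore k)).card ≤
        (((Finset.Icc 1 n).powerset.filter Primitive) ×ˢ T.powerset).card := by
    apply Finset.card_le_card_of_injOn (fun S => (S \ T, S ∩ T))
    · intro S hS
      rw [Finset.mem_coe] at hS; rw [Finset.mem_coe, Finset.mem_product]
      constructor
      · rw [Finset.mem_filter, Finset.mem_powerset]
        rw [Finset.mem_filter, Finset.mem_powerset] at hS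
        exact ⟨(Finset.sdiff_subset).trans hS.1, key S (by
          rw [Finset.mem_filter, Finset.mem_powerset]; exact hS)⟩
      · rw [Finset.mem_powerset]
        exact Finset.inter_subset_right
    · intro S1 _ S2 _ hEq
      simp only [Prod.mk.injEq] at hEq
      have e1 : S1 \ T ∪ S1 ∩ T = S1 := Finset.sdiff_union_inter S1 T
      have e2 : S2 \ T ∪ S2 ∩ T = S2 := Finset.sdiff_union_inter S2 T
      rw [← e1, ← e2, hEq.1, hEq.2]
  calc fk n k ≤ (((Finset.Icc 1 n).powerset.filter Primitive) ×ˢ T.powerset).card := hinj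
    _ = 2 ^ (n / k) * f n := by
        rw [Finset.card_product, Finset.card_powerset, hT, Nat.card_Icc]
        simp [f, mul_comm]

lemma u_le_v (n k : ℕ) : ((f n : ℝ)) ^ ((1:ℝ)/n) ≤ ((fk n k : ℝ)) ^ ((1:ℝ)/n) :=
  Real.rpow_le_rpow (by positivity) (by exact_mod_cast f_le_fk n k) (by positivity)

lemma v_le_u (n k : ℕ) (hk : 1 ≤ k) (hn : 1 ≤ n) :
    ((fk n k : ℝ)) ^ ((1:ℝ)/n) ≤ ((f n : ℝ)) ^ ((1:ℝ)/n) * 2 ^ ((1:ℝ)/k) := by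
  have h1 : ((fk n k : ℝ)) ≤ (f n : ℝ) * 2 ^ (n/k : ℕ) := by
    have := fk_le n k hk
    have : ((fk n k : ℕ) : ℝ) ≤ ((2 ^ (n/k) * f n : ℕ) : ℝ) := by exact_mod_cast this
    push_cast at this
    linarith
  have hkpos : (0:ℝ) < (k:ℝ) := by exact_mod_cast hk
  have hnpos : (0:ℝ) < (n:ℝ) := by exact_mod_cast hn
  calc ((fk n k : ℝ)) ^ ((1:ℝ)/n) ≤ ((f n : ℝ) * 2 ^ (n/k : ℕ)) ^ ((1:ℝ)/n) :=
        Real.rpow_le_rpow (by positivity) h1 (by positivity)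
    _ = (f n : ℝ) ^ ((1:ℝ)/n) * ((2:ℝ) ^ (n/k : ℕ)) ^ ((1:ℝ)/n) :=
        Real.mul_rpow (by positivity) (by positivity)
    _ ≤ (f n : ℝ) ^ ((1:ℝ)/n) * 2 ^ ((1:ℝ)/k) := by
        apply mul_le_mul_of_nonneg_left ?_ (by positivity)
        rw [← Real.rpow_natCast 2 (n/k), ← Real.rpow_mul (by norm_num)]
        apply Real.rpow_le_rpow_of_exponent_le (by norm_num)
        rw [mul_one_div, div_le_div_iff₀ hnpos hkpos, one_mul]
        exact_mod_cast Nat.div_mul_le_self n k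

/-- If for each `k ≥ 2` the limit `α_k = lim_n f(n,k)^{1/n}` exists, then the
`α_k` are nonincreasing, converge to some `α ≥ 0`, and `lim_n f(n)^{1/n}` exists
and equals `α`. -/
theorem stmt_14 (α : ℕ → ℝ)
    (h : ∀ k, 2 ≤ k →
      Tendsto (fun n : ℕ => (fk n k : ℝ) ^ ((1 : ℝ) / n)) atTop (nhds (α k))) :
    (∀ k, 2 ≤ k → α (k + 1) ≤ α k) ∧
    ∃ A : ℝ, 0 ≤ A ∧ Tendsto (fun k : ℕ => α (k + 2)) atTop (nhds A) ∧
      Tendsto (fun n : ℕ => (f n : ℝ) ^ ((1 : ℝ) / n)) atTop (nhds A) := by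
  have hα0 : ∀ k, 2 ≤ k → 0 ≤ α k := fun k hk =>
    ge_of_tendsto' (h k hk) fun n => Real.rpow_nonneg (by positivity) _
  have part1 : ∀ k, 2 ≤ k → α (k + 1) ≤ α k := by
    intro k hk
    refine le_of_tendsto_of_tendsto' (h (k+1) (by omega)) (h k hk) fun n => ?_
    exact Real.rpow_le_rpow (by positivity) (by exact_mod_cast fk_anti n k) (by positivity)
  have hmono : ∀ a b : ℕ, 2 ≤ a → a ≤ b → α b ≤ α a := by
    intro a b ha hab
    induction b, hab using Nat.le_induction with
    | base => exact le_refl _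
    | succ b hb ih => exact (part1 b (by omega)).trans ih
  refine ⟨part1, ⨅ j : ℕ, α (j + 2), ?_, ?_, ?_⟩
  case _ => exact le_ciInf fun j => hα0 _ (by omega)
  all_goals
    have hbdd : BddBelow (Set.range fun j : ℕ => α (j + 2)) :=
      ⟨0, by rintro x ⟨j, rfl⟩; exact hα0 _ (by omega)⟩
    have hanti : Antitone (fun j : ℕ => α (j + 2)) :=
      antitone_nat_of_succ_le fun j => part1 (j + 2) (by omega)
    have htendA : Tendsto (fun j : ℕ => α (j + 2)) atTop (nhds (⨅ j : ℕ, α (j + 2))) :=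
      tendsto_atTop_ciInf hanti hbdd
  case _ => exact htendA
  have hAle : ∀ k, 2 ≤ k → (⨅ j : ℕ, α (j + 2)) ≤ α k := fun k hk =>
    (ciInf_le hbdd k).trans (hmono k (k + 2) hk (by omega))
  rw [tendsto_order]
  constructor
  · -- lower bound
    intro b hb
    by_cases hb1 : b < 1
    · filter_upwards with n
      have h1 := Real.rpow_le_rpow zero_le_one
        (show (1:ℝ) ≤ (f n : ℝ) by exact_mod_cast one_le_f n)
        (show (0:ℝ) ≤ (1:ℝ)/n by positivity)
      rw [Real.one_rpow] at h1
      have : (1:ℝ) ≤ (f n : ℝ) ^ ((1:ℝ)/n) := h1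
      linarith
    push_neg at hb1
    have hbpos : (0:ℝ) < b := by linarith
    have hAb : 1 < (⨅ j : ℕ, α (j + 2)) / b := (one_lt_div hbpos).2 hb
    have h2k : Tendsto (fun k : ℕ => (2:ℝ) ^ ((1:ℝ)/k)) atTop (nhds 1) := by
      have := (tendsto_const_nhds (x := (2:ℝ)) (f := atTop)).rpow
        tendsto_one_div_atTop_nhds_zero_nat (Or.inl two_ne_zero)
      simpa using this
    obtain ⟨k, hklt, hk2⟩ :=
      ((h2k.eventually_lt_const hAb).and (eventually_ge_atTop 2)).exists
    have hbk : b * 2 ^ ((1:ℝ)/k) < α k := by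
      have h1 : b * 2 ^ ((1:ℝ)/k) < b * ((⨅ j : ℕ, α (j + 2)) / b) :=
        mul_lt_mul_of_pos_left hklt hbpos
      rw [mul_div_cancel₀ _ (ne_of_gt hbpos)] at h1
      exact h1.trans_le (hAle k hk2)
    filter_upwards [(h k hk2).eventually_const_lt hbk, eventually_ge_atTop 1] with n hn hn1
    have hvu := v_le_u n k (by omega) hn1
    have h2pos : (0:ℝ) < 2 ^ ((1:ℝ)/k) := by positivity
    have : b * 2 ^ ((1:ℝ)/k) < (f n : ℝ) ^ ((1:ℝ)/n) * 2 ^ ((1:ℝ)/k) := hn.trans_le hvu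
    exact lt_of_mul_lt_mul_right this h2pos.le
  · -- upper bound
    intro b hb
    obtain ⟨j, hj⟩ := (htendA.eventually_lt_const hb).exists
    filter_upwards [(h (j + 2) (by omega)).eventually_lt_const hj] with n hn
    exact lt_of_le_of_lt (u_le_v n (j + 2)) hn
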